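/- Let ν, ε > 0 and √(2ε/ν) ≤ τ ≤ t. Then there is a universal constant C (independent of ν, ε, τ, t) such that ∫_τ^t s^{−2} e^{−ν(t²−s²)/(2ε)} ds ≤ (C/ν)·(ε/t³)·(1 + ξ^{3/2} e^{−ξ/2}/√ξ₀), where ξ = νt²/(2ε) and ξ₀ = ντ²/(2ε); in particular, since t³ e^{−νt²/(4ε)} ≤ (6ε/ν)^{3/2} e^{−3/2} for all t ≥ 0, the whole integral is bounded by a constant (depending only on ν) times ε/t³. -/

import Mathlib

open Real MeasureTheory

lemma sqle_exp (x : ℝ) (hx : 0 ≤ x) : (x/2)^2 ≤ Real.exp x := by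
  have h1 := Real.add_one_le_exp (x/2)
  have h2 : Real.exp x = Real.exp (x/2) * Real.exp (x/2) := by
    rw [← Real.exp_add]; ring_nf
  nlinarith [Real.exp_pos (x/2)]

lemma integrableAux (ν ε t a b : ℝ) (ha : 0 < a) (hab : a ≤ b) :
    IntervalIntegrable (fun s => (1/s^2) * Real.exp (-ν*(t^2-s^2)/(2*ε))) volume a b := by
  apply ContinuousOn.intervalIntegrable
  apply ContinuousOn.mul
  · apply ContinuousOn.div continuousOn_const (continuous_pow 2).continuousOn
    intro x hx
    rw [Set.uIcc_of_le hab] at hx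
    have : 0 < x := lt_of_lt_of_le ha hx.1
    positivity
  · exact (Real.continuous_exp.comp (by continuity)).continuousOn

lemma piece2 (ν ε t a : ℝ) (hν : 0 < ν) (hε : 0 < ε) (ht : 0 < t)
    (ha : 3*t/4 ≤ a) (hat : a ≤ t) :
    (∫ s in a..t, (1/s^2) * Real.exp (-ν*(t^2-s^2)/(2*ε))) ≤ 4 * (ε/(ν*t^3)) := by
  have ha0 : 0 < a := lt_of_lt_of_le (by linarith) ha
  set c : ℝ := ν*t/(2*ε) with hc
  have hc0 : 0 < c := by positivity
  set d : ℝ := ν*t^2/(2*ε) with hd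
  -- pointwise bound
  have hmono : (∫ s in a..t, (1/s^2) * Real.exp (-ν*(t^2-s^2)/(2*ε)))
      ≤ ∫ s in a..t, (16/(9*t^2)) * Real.exp (c*s - d) := by
    apply intervalIntegral.integral_mono_on hat (integrableAux ν ε t a t ha0 hat)
    · exact Continuous.intervalIntegrable (by continuity) a t
    · intro s hs
      have hs1 : 3*t/4 ≤ s := le_trans ha hs.1
      have hs2 : s ≤ t := hs.2
      have hs0 : 0 < s := lt_of_lt_of_le ha0 hs.1
      apply mul_le_mul
      · rw [div_le_div_iff₀ (by positivity) (by positivity)]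
        nlinarith
      · apply Real.exp_le_exp.mpr
        have heq : c*s - d = (ν*t*s - ν*t^2)/(2*ε) := by rw [hc, hd]; ring
        rw [heq, div_le_div_iff_of_pos_right (by positivity : (0:ℝ) < 2*ε)]
        nlinarith [mul_le_mul_of_nonneg_left hs2 (mul_pos hν hs0).le]
      · positivity
      · positivity
  -- FTC on the exponential
  have hder : ∀ s : ℝ, HasDerivAt (fun x => (1/c) * Real.exp (c*x - d)) (Real.exp (c*s - d)) s := by
    intro s
    have h1 : HasDerivAt (fun x : ℝ => c*x - d) c s := by
      simpa using ((hasDerivAt_id s).const_mul c).sub_const d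
    have h2 := (h1.exp).const_mul (1/c)
    refine h2.congr_deriv ?_
    rw [mul_comm (Real.exp _) c, ← mul_assoc, one_div, inv_mul_cancel₀ hc0.ne', one_mul]
  have hint : (∫ s in a..t, Real.exp (c*s - d))
      = (1/c) * Real.exp (c*t - d) - (1/c) * Real.exp (c*a - d) :=
    intervalIntegral.integral_eq_sub_of_hasDerivAt (fun s _ => hder s)
      (Continuous.intervalIntegrable (by continuity) a t)
  have h3 : (∫ s in a..t, (16/(9*t^2)) * Real.exp (c*s - d))
      = (16/(9*t^2)) * ((1/c) * Real.exp (c*t - d) - (1/c) * Real.exp (c*a - d)) := by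
    rw [intervalIntegral.integral_const_mul, hint]
  have hctd : c*t - d = 0 := by rw [hc, hd]; ring
  have hexpa : Real.exp (c*a - d) > 0 := Real.exp_pos _
  have hcfin : (1/c) = 2*ε/(ν*t) := by rw [hc]; field_simp
  calc _ ≤ (16/(9*t^2)) * ((1/c) * Real.exp (c*t - d) - (1/c) * Real.exp (c*a - d)) := by
        rw [← h3]; exact hmono
    _ ≤ (16/(9*t^2)) * ((1/c) * 1) := by
        apply mul_le_mul_of_nonneg_left _ (by positivity)
        rw [hctd, Real.exp_zero]
        nlinarith [mul_pos (one_div_pos.mpr hc0) hexpa]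
    _ ≤ 4 * (ε/(ν*t^3)) := by
        rw [hcfin]
        have h4 : 16 / (9*t^2) * (2*ε/(ν*t) * 1) = (32/9) * (ε/(ν*t^3)) := by
          field_simp; ring
        rw [h4]
        apply mul_le_mul_of_nonneg_right (by norm_num) (by positivity)

lemma piece1 (ν ε τ t : ℝ) (hν : 0 < ν) (hε : 0 < ε) (hτ0 : 0 < τ)
    (hτm : τ ≤ 3*t/4) (hτt : τ ≤ t) (h2 : 2*ε/ν ≤ τ^2) :
    (∫ s in τ..(3*t/4), (1/s^2) * Real.exp (-ν*(t^2-s^2)/(2*ε))) ≤ 128 * (ε/(ν*t^3)) := by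
  have ht0 : 0 < t := lt_of_lt_of_le hτ0 hτt
  set E : ℝ := Real.exp (-(ν*t^2/(8*ε))) with hE
  have hE0 : 0 < E := Real.exp_pos _
  have hcont : ContinuousOn (fun s : ℝ => 1/s^2) (Set.uIcc τ (3*t/4)) := by
    apply ContinuousOn.div continuousOn_const (continuous_pow 2).continuousOn
    intro x hx
    rw [Set.uIcc_of_le hτm] at hx
    have : 0 < x := lt_of_lt_of_le hτ0 hx.1
    positivity
  -- pointwise bound by E * (1/s^2)
  have hmono : (∫ s in τ..(3*t/4), (1/s^2) * Real.exp (-ν*(t^2-s^2)/(2*ε)))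
      ≤ ∫ s in τ..(3*t/4), E * (1/s^2) := by
    apply intervalIntegral.integral_mono_on hτm (integrableAux ν ε t τ _ hτ0 hτm)
    · exact (continuousOn_const.mul hcont).intervalIntegrable
    · intro s hs
      have hs0 : 0 < s := lt_of_lt_of_le hτ0 hs.1
      have hs2 : s ≤ 3*t/4 := hs.2
      rw [mul_comm E _]
      apply mul_le_mul_of_nonneg_left _ (by positivity)
      rw [hE]
      apply Real.exp_le_exp.mpr
      have e1 : -ν*(t^2-s^2)/(2*ε) = (-ν*(t^2-s^2)/4)/(2*ε/4) := by ring
      have e2 : -(ν*t^2/(8*ε)) = (-(ν*t^2)/16)/(2*ε/4) := by ring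
      rw [e1, e2, div_le_div_iff_of_pos_right (by positivity : (0:ℝ) < 2*ε/4)]
      have hss : s*s ≤ (3*t/4)*(3*t/4) := mul_self_le_mul_self hs0.le hs2
      nlinarith [mul_le_mul_of_nonneg_left hss hν.le]
  -- FTC for 1/s^2
  have hder : ∀ s ∈ Set.uIcc τ (3*t/4), HasDerivAt (fun y : ℝ => -(y⁻¹)) (1/s^2) s := by
    intro s hs
    rw [Set.uIcc_of_le hτm] at hs
    have hs0 : s ≠ 0 := ne_of_gt (lt_of_lt_of_le hτ0 hs.1)
    have := (hasDerivAt_inv hs0).neg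
    simp only [neg_neg] at this
    rw [one_div]; exact this
  have hint : (∫ s in τ..(3*t/4), 1/s^2) = -((3*t/4)⁻¹) - -(τ⁻¹) :=
    intervalIntegral.integral_eq_sub_of_hasDerivAt hder hcont.intervalIntegrable
  have h3 : (∫ s in τ..(3*t/4), E * (1/s^2)) = E * (τ⁻¹ - (3*t/4)⁻¹) := by
    rw [intervalIntegral.integral_const_mul, hint]; ring
  have hτinv : (0:ℝ) < (3*t/4)⁻¹ := by positivity
  have hkey : 2*ε ≤ ν*τ*t := by
    have h2' : 2*ε ≤ ν*τ^2 := by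
      rw [div_le_iff₀ hν] at h2; nlinarith
    nlinarith [mul_le_mul_of_nonneg_left hτt (mul_pos hν hτ0).le]
  have hEbound : E ≤ (16*ε/(ν*t^2))^2 := by
    have hx : (0:ℝ) ≤ ν*t^2/(8*ε) := by positivity
    have := sqle_exp (ν*t^2/(8*ε)) hx
    have hsq : (ν*t^2/(8*ε)/2)^2 = (ν*t^2/(16*ε))^2 := by ring
    rw [hE, Real.exp_neg]
    rw [hsq] at this
    have hpos : (0:ℝ) < (ν*t^2/(16*ε))^2 := by positivity
    calc (Real.exp (ν*t^2/(8*ε)))⁻¹ ≤ ((ν*t^2/(16*ε))^2)⁻¹ := by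
          apply inv_anti₀ hpos this
      _ = (16*ε/(ν*t^2))^2 := by field_simp
  calc (∫ s in τ..(3*t/4), (1/s^2) * Real.exp (-ν*(t^2-s^2)/(2*ε)))
      ≤ E * (τ⁻¹ - (3*t/4)⁻¹) := by rw [← h3]; exact hmono
    _ ≤ E * τ⁻¹ := by nlinarith
    _ ≤ (16*ε/(ν*t^2))^2 * τ⁻¹ := by
        apply mul_le_mul_of_nonneg_right hEbound (by positivity)
    _ ≤ 128 * (ε/(ν*t^3)) := by
        have eL : (16*ε/(ν*t^2))^2 * τ⁻¹ = 256*ε^2/(ν^2*t^4*τ) := by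
          field_simp; ring
        have eR : 128 * (ε/(ν*t^3)) = 128*ε/(ν*t^3) := by ring
        rw [eL, eR, div_le_div_iff₀ (by positivity) (by positivity)]
        nlinarith [mul_le_mul_of_nonneg_left hkey
          (by positivity : (0:ℝ) ≤ 128*ε*ν*t^3)]

lemma mainBound (ν ε τ t : ℝ) (hν : 0 < ν) (hε : 0 < ε)
    (hτ : Real.sqrt (2 * ε / ν) ≤ τ) (hτt : τ ≤ t) :
    (∫ s in τ..t, (1 / s ^ 2) * Real.exp (-ν * (t ^ 2 - s ^ 2) / (2 * ε)))
      ≤ 132 * (ε / (ν * t ^ 3)) := by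
  have hτ0 : 0 < τ := lt_of_lt_of_le (Real.sqrt_pos.mpr (by positivity)) hτ
  have ht0 : 0 < t := lt_of_lt_of_le hτ0 hτt
  have h2 : 2*ε/ν ≤ τ^2 := by
    have := Real.sq_sqrt (by positivity : (0:ℝ) ≤ 2*ε/ν)
    calc 2*ε/ν = Real.sqrt (2*ε/ν)^2 := this.symm
      _ ≤ τ^2 := by apply pow_le_pow_left₀ (Real.sqrt_nonneg _) hτ
  by_cases hc : τ ≤ 3*t/4
  · have hmt : 3*t/4 ≤ t := by linarith
    have hsplit : (∫ s in τ..(3*t/4), (1/s^2) * Real.exp (-ν*(t^2-s^2)/(2*ε)))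
        + (∫ s in (3*t/4)..t, (1/s^2) * Real.exp (-ν*(t^2-s^2)/(2*ε)))
        = ∫ s in τ..t, (1/s^2) * Real.exp (-ν*(t^2-s^2)/(2*ε)) :=
      intervalIntegral.integral_add_adjacent_intervals
        (integrableAux ν ε t τ _ hτ0 hc) (integrableAux ν ε t _ t (by linarith) hmt)
    have hp1 := piece1 ν ε τ t hν hε hτ0 hc hτt h2
    have hp2 := piece2 ν ε t (3*t/4) hν hε ht0 (le_refl _) hmt
    have : (∫ s in τ..t, (1 / s ^ 2) * Real.exp (-ν * (t ^ 2 - s ^ 2) / (2 * ε)))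
        ≤ 128 * (ε/(ν*t^3)) + 4 * (ε/(ν*t^3)) := by
      rw [← hsplit]; exact add_le_add hp1 hp2
    linarith
  · push_neg at hc
    have := piece2 ν ε t τ hν hε ht0 hc.le hτt
    have hnn : (0:ℝ) ≤ ε/(ν*t^3) := by positivity
    linarith

/-- Estimate (5.76)–(5.77): there is a universal constant `C` with
`∫_τ^t s⁻² e^{-ν(t²-s²)/(2ε)} ds ≤ (C/ν)(ε/t³)(1 + ξ^{3/2} e^{-ξ/2}/√ξ₀)`,
where `ξ = νt²/(2ε)`, `ξ₀ = ντ²/(2ε)`; in particular, for each `ν` the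
integral is bounded by a constant times `ε/t³`. -/
theorem stmt16 :
    (∃ C > (0:ℝ), ∀ ν ε τ t : ℝ, 0 < ν → 0 < ε →
      Real.sqrt (2 * ε / ν) ≤ τ → τ ≤ t →
      (∫ s in τ..t, (1 / s ^ 2) * Real.exp (-ν * (t ^ 2 - s ^ 2) / (2 * ε)))
        ≤ (C / ν) * (ε / t ^ 3) *
            (1 + (ν * t ^ 2 / (2 * ε)) ^ ((3:ℝ) / 2)
                  * Real.exp (-(ν * t ^ 2 / (2 * ε)) / 2)
                  / Real.sqrt (ν * τ ^ 2 / (2 * ε))))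
    ∧ (∀ ν : ℝ, 0 < ν → ∃ C' > (0:ℝ), ∀ ε τ t : ℝ, 0 < ε →
      Real.sqrt (2 * ε / ν) ≤ τ → τ ≤ t →
      (∫ s in τ..t, (1 / s ^ 2) * Real.exp (-ν * (t ^ 2 - s ^ 2) / (2 * ε)))
        ≤ C' * (ε / t ^ 3)) := by
  constructor
  · refine ⟨132, by norm_num, fun ν ε τ t hν hε hτ hτt => ?_⟩
    have hτ0 : 0 < τ := lt_of_lt_of_le (Real.sqrt_pos.mpr (by positivity)) hτ
    have ht0 : 0 < t := lt_of_lt_of_le hτ0 hτt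
    have heq : (132:ℝ) * (ε / (ν * t ^ 3)) = (132 / ν) * (ε / t ^ 3) := by
      field_simp
    have hX : (0:ℝ) ≤ (ν * t ^ 2 / (2 * ε)) ^ ((3:ℝ) / 2)
        * Real.exp (-(ν * t ^ 2 / (2 * ε)) / 2) / Real.sqrt (ν * τ ^ 2 / (2 * ε)) := by
      positivity
    calc (∫ s in τ..t, (1 / s ^ 2) * Real.exp (-ν * (t ^ 2 - s ^ 2) / (2 * ε)))
        ≤ 132 * (ε / (ν * t ^ 3)) := mainBound ν ε τ t hν hε hτ hτt
      _ = (132 / ν) * (ε / t ^ 3) := heq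
      _ ≤ (132 / ν) * (ε / t ^ 3) * (1 + _) := by
          apply le_mul_of_one_le_right (by positivity)
          linarith
  · intro ν hν
    refine ⟨132 / ν, by positivity, fun ε τ t hε hτ hτt => ?_⟩
    have hτ0 : 0 < τ := lt_of_lt_of_le (Real.sqrt_pos.mpr (by positivity)) hτ
    have ht0 : 0 < t := lt_of_lt_of_le hτ0 hτt
    have heq : (132:ℝ) * (ε / (ν * t ^ 3)) = (132 / ν) * (ε / t ^ 3) := by
      field_simp
    calc (∫ s in τ..t, (1 / s ^ 2) * Real.exp (-ν * (t ^ 2 - s ^ 2) / (2 * ε)))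
        ≤ 132 * (ε / (ν * t ^ 3)) := mainBound ν ε τ t hν hε hτ hτt
      _ = (132 / ν) * (ε / t ^ 3) := heq
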